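/- There is an absolute constant C > 0 with the following property. For any 0 < ε < 1 and 0 < δ < 1, let S be a sparse embedding (CountSketch) random matrix with r rows and d columns, where r ≥ C·d²/(ε²δ). Then for any fixed real n×d matrix A, with probability at least 1 − δ, simultaneously for all x ∈ ℝ^d it holds that (1 − ε)‖Ax‖₂² ≤ ‖SAx‖₂² ≤ (1 + ε)‖Ax‖₂², i.e., S is a (1 ± ε) ℓ₂-subspace embedding for A. -/

import Mathlib

open MeasureTheory Matrix
open scoped ENNReal

/-- The Euclidean norm of a vector in `ℝ^n`. -/
noncomputable def euclNorm {n : ℕ} (x : Fin n → ℝ) : ℝ := Real.sqrt (∑ i, (x i) ^ 2)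

/-- The probability space underlying a CountSketch (sparse embedding) matrix with `r`
rows and `d` columns: `2d` mutually independent uniform random variables, `d` of them
uniform on `{1,…,r}` (the hash values) and `d` of them uniform on `{−1,+1}` (the signs,
encoded as booleans), modeled by the uniform measure on the finite product space. -/
noncomputable def countSketchMeasure (r d : ℕ) (hr : r ≠ 0) :
    Measure ((Fin d → Fin r) × (Fin d → Bool)) :=
  haveI : NeZero r := ⟨hr⟩
  (PMF.uniformOfFintype ((Fin d → Fin r) × (Fin d → Bool))).toMeasure

/-- The sign `σ(j) ∈ {−1, +1}` encoded by a boolean. -/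
def countSketchSign (b : Bool) : ℝ := if b then 1 else -1

/-- The CountSketch (sparse embedding) matrix determined by hash values `ω.1` and
signs `ω.2`: the `(i,j)` entry is `σ(j)` if `h(j) = i` and `0` otherwise. -/
noncomputable def countSketch {r n : ℕ} (ω : (Fin n → Fin r) × (Fin n → Bool)) :
    Matrix (Fin r) (Fin n) ℝ :=
  Matrix.of fun i j => if ω.1 j = i then countSketchSign (ω.2 j) else 0

/-! ### Auxiliary lemmas -/

section Aux

open Finset Module

lemma exists_onb (n d : ℕ) (A : Matrix (Fin n) (Fin d) ℝ) :
    ∃ (m : ℕ) (U : Fin m → Fin n → ℝ), m ≤ d ∧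
      (∀ j k, ∑ i, U j i * U k i = if j = k then (1:ℝ) else 0) ∧
      (∀ x : Fin d → ℝ, ∃ y : Fin m → ℝ, A.mulVec x = fun i => ∑ j, y j * U j i) := by
  classical
  set E := EuclideanSpace ℝ (Fin n)
  set W : Submodule ℝ E := Submodule.span ℝ (Set.range fun j => WithLp.toLp 2 (Aᵀ j)) with hW
  set m := finrank ℝ W with hm
  set b := stdOrthonormalBasis ℝ W with hb
  refine ⟨m, fun j i => (b j : E) i, ?_, ?_, ?_⟩
  · have := finrank_span_le_card (R := ℝ) (Set.range fun j => WithLp.toLp 2 (Aᵀ j))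
    refine this.trans ?_
    rw [Set.toFinset_range]
    exact (Finset.card_image_le).trans (by simp)
  · intro j k
    have h := (orthonormal_iff_ite (𝕜 := ℝ)).mp b.orthonormal j k
    rw [Submodule.coe_inner, PiLp.inner_apply] at h
    simp [RCLike.inner_apply] at h
    rw [← h]
    exact Finset.sum_congr rfl fun i _ => mul_comm _ _
  · intro x
    have hmem : (WithLp.toLp 2 (A.mulVec x) : E) ∈ W := by
      have hx : (WithLp.toLp 2 (A.mulVec x) : E) = ∑ j, x j • (WithLp.toLp 2 (Aᵀ j) : E) := by
        ext i
        simp [Matrix.mulVec, dotProduct, Finset.sum_apply, Matrix.transpose_apply,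
          mul_comm]
      rw [hx]
      exact Submodule.sum_mem _ fun j _ =>
        Submodule.smul_mem _ _ (Submodule.subset_span (Set.mem_range_self j))
    refine ⟨fun j => b.repr ⟨WithLp.toLp 2 (A.mulVec x), hmem⟩ j, ?_⟩
    have h := b.sum_repr ⟨WithLp.toLp 2 (A.mulVec x), hmem⟩
    have h2 : ((∑ j, b.repr ⟨WithLp.toLp 2 (A.mulVec x), hmem⟩ j • b j : W) : E) = WithLp.toLp 2 (A.mulVec x) := by
      rw [h]
    funext i
    have h3 : (A.mulVec x) i = ((∑ j, b.repr ⟨WithLp.toLp 2 (A.mulVec x), hmem⟩ j • b j : W) : E) i :=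
      by rw [h2]
    rw [h3, AddSubmonoidClass.coe_finset_sum]
    simp only [Submodule.coe_smul]
    have h4 : (∑ x_1, b.repr ⟨WithLp.toLp 2 (A.mulVec x), hmem⟩ x_1 • ((b x_1 : E))) i
        = ∑ x_1, (b.repr ⟨WithLp.toLp 2 (A.mulVec x), hmem⟩ x_1 • (b x_1 : E)) i :=
      by rw [WithLp.ofLp_sum, Finset.sum_apply]
    rw [h4]
    rfl

@[simp] lemma sgn_mul_self (b : Bool) : countSketchSign b * countSketchSign b = 1 := by
  cases b <;> norm_num [countSketchSign]

lemma sgn_sq (a b : Bool) : countSketchSign a * countSketchSign b *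
    (countSketchSign a * countSketchSign b) = 1 := by
  cases a <;> cases b <;> norm_num [countSketchSign]

lemma sgn_sq' (a b : Bool) : countSketchSign a * countSketchSign b *
    (countSketchSign b * countSketchSign a) = 1 := by
  cases a <;> cases b <;> norm_num [countSketchSign]

@[simp] lemma sgn_not (b : Bool) : countSketchSign (!b) = - countSketchSign b := by
  cases b <;> simp [countSketchSign]

lemma hash_count {n r : ℕ} (j k : Fin n) (hjk : j ≠ k) :
    ∑ h : Fin n → Fin r, (if h j = h k then (1:ℝ) else 0) = (r : ℝ) ^ (n - 1) := by
  classical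
  let e := Equiv.piSplitAt j (fun _ : Fin n => Fin r)
  rw [← Equiv.sum_comp e.symm (fun h => if h j = h k then (1:ℝ) else 0)]
  have key : ∀ z : Fin r × ({i : Fin n // i ≠ j} → Fin r),
      (if e.symm z j = e.symm z k then (1:ℝ) else 0)
        = if z.1 = z.2 ⟨k, Ne.symm hjk⟩ then (1:ℝ) else 0 := by
    intro z
    simp [e, Equiv.piSplitAt_symm_apply, Ne.symm hjk]
  rw [Finset.sum_congr rfl fun z _ => key z]
  rw [Fintype.sum_prod_type_right]
  simp only [Finset.sum_ite_eq, Finset.mem_univ, if_true]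
  simp [Fintype.card_fun]

lemma sign_sum_zero {n : ℕ} (j k j' k' i₀ : Fin n)
    (h1 : (i₀ = j ∧ k ≠ i₀) ∨ (i₀ = k ∧ j ≠ i₀)) (h2 : j' ≠ i₀) (h3 : k' ≠ i₀) :
    ∑ σ : Fin n → Bool, countSketchSign (σ j) * countSketchSign (σ k) *
      (countSketchSign (σ j') * countSketchSign (σ k')) = 0 := by
  classical
  refine Finset.sum_involution (fun σ _ => Function.update σ i₀ (!σ i₀)) ?_ ?_
    (fun _ _ => Finset.mem_univ _) ?_
  · intro σ _
    rcases h1 with ⟨rfl, hk⟩ | ⟨rfl, hj⟩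
    · simp [Function.update_apply, hk, h2, h3]
    · simp [Function.update_apply, hj, h2, h3]
  · intro σ _ hσ hupd
    have h2 := congrFun hupd i₀
    simp at h2
  · intro σ _
    funext t
    by_cases ht : t = i₀ <;> simp [Function.update_apply, ht]

lemma Tval {r n : ℕ} (p q : Fin n × Fin n) (hp : p.1 ≠ p.2) (hq : q.1 ≠ q.2) :
    ∑ ω : (Fin n → Fin r) × (Fin n → Bool),
      (if ω.1 p.1 = ω.1 p.2 then countSketchSign (ω.2 p.1) * countSketchSign (ω.2 p.2) else 0) *
      (if ω.1 q.1 = ω.1 q.2 then countSketchSign (ω.2 q.1) * countSketchSign (ω.2 q.2) else 0)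
    = if q = p ∨ q = p.swap then (2:ℝ)^n * (r:ℝ)^(n-1) else 0 := by
  classical
  rw [Fintype.sum_prod_type]
  have expand : ∀ (h : Fin n → Fin r) (σ : Fin n → Bool),
      (if h p.1 = h p.2 then countSketchSign (σ p.1) * countSketchSign (σ p.2) else 0) *
      (if h q.1 = h q.2 then countSketchSign (σ q.1) * countSketchSign (σ q.2) else 0)
      = ((if h p.1 = h p.2 then (1:ℝ) else 0) * (if h q.1 = h q.2 then (1:ℝ) else 0))
        * (countSketchSign (σ p.1) * countSketchSign (σ p.2) *
           (countSketchSign (σ q.1) * countSketchSign (σ q.2))) := by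
    intro h σ
    by_cases h1 : h p.1 = h p.2 <;> by_cases h2 : h q.1 = h q.2 <;> simp [h1, h2] <;> ring
  simp only [expand]
  rw [← Finset.sum_mul_sum]
  by_cases hc : q = p ∨ q = p.swap
  · rw [if_pos hc]
    have hA : (∑ h : Fin n → Fin r,
        (if h p.1 = h p.2 then (1:ℝ) else 0) * (if h q.1 = h q.2 then (1:ℝ) else 0))
        = (r : ℝ) ^ (n-1) := by
      have heq : ∀ h : Fin n → Fin r,
          (if h p.1 = h p.2 then (1:ℝ) else 0) * (if h q.1 = h q.2 then (1:ℝ) else 0)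
          = (if h p.1 = h p.2 then (1:ℝ) else 0) := by
        intro h
        rcases hc with hcq | hcq <;> rw [hcq] <;>
          [skip; simp only [Prod.fst_swap, Prod.snd_swap]] <;>
          by_cases h1 : h p.1 = h p.2
        · simp [h1]
        · simp [h1]
        · simp [h1]
        · have h2 : ¬ h p.2 = h p.1 := fun hh => h1 hh.symm
          simp [h1, h2]
      simp only [heq]
      exact hash_count p.1 p.2 hp
    have hB : (∑ σ : Fin n → Bool,
        countSketchSign (σ p.1) * countSketchSign (σ p.2) *
          (countSketchSign (σ q.1) * countSketchSign (σ q.2))) = (2:ℝ)^n := by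
      have heq : ∀ σ : Fin n → Bool,
          countSketchSign (σ p.1) * countSketchSign (σ p.2) *
          (countSketchSign (σ q.1) * countSketchSign (σ q.2)) = 1 := by
        intro σ
        rcases hc with hcq | hcq <;> rw [hcq]
        · exact sgn_sq _ _
        · simp only [Prod.fst_swap, Prod.snd_swap]
          exact sgn_sq' _ _
      simp only [heq]
      simp [Fintype.card_fun]
    rw [hA, hB]; ring
  · rw [if_neg hc]
    push_neg at hc
    obtain ⟨hc1, hc2⟩ := hc
    have key : ∃ i₀ : Fin n, ((i₀ = p.1 ∧ p.2 ≠ i₀) ∨ (i₀ = p.2 ∧ p.1 ≠ i₀)) ∧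
        q.1 ≠ i₀ ∧ q.2 ≠ i₀ := by
      by_cases hj1 : q.1 = p.1
      · have hq2 : q.2 ≠ p.2 := fun h => hc1 (Prod.ext hj1 h)
        exact ⟨p.2, Or.inr ⟨rfl, hp⟩, fun h => hp (hj1.symm.trans h), hq2⟩
      · by_cases hj2 : q.2 = p.1
        · by_cases hk1 : q.1 = p.2
          · exact absurd (Prod.ext hk1 hj2) hc2
          · exact ⟨p.2, Or.inr ⟨rfl, hp⟩, hk1, fun h => hp (hj2.symm.trans h)⟩
        · exact ⟨p.1, Or.inl ⟨rfl, fun h => hp h.symm⟩, hj1, hj2⟩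
    obtain ⟨i₀, h1, h2, h3⟩ := key
    rw [sign_sum_zero p.1 p.2 q.1 q.2 i₀ h1 h2 h3, mul_zero]

/-- The cross term of the CountSketch quadratic form. -/
noncomputable def csT {r n : ℕ} (ω : (Fin n → Fin r) × (Fin n → Bool)) (u v : Fin n → ℝ)
    (p : Fin n × Fin n) : ℝ :=
  (if ω.1 p.1 = ω.1 p.2 then countSketchSign (ω.2 p.1) * countSketchSign (ω.2 p.2) else 0)
    * (u p.1 * v p.2)

/-- The CountSketch quadratic form `⟨Su, Sv⟩`. -/
noncomputable def csQ {r n : ℕ} (ω : (Fin n → Fin r) × (Fin n → Bool)) (u v : Fin n → ℝ) : ℝ :=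
  ∑ i, (countSketch ω).mulVec u i * (countSketch ω).mulVec v i

lemma csQ_eq {r n : ℕ} (ω : (Fin n → Fin r) × (Fin n → Bool)) (u v : Fin n → ℝ) :
    csQ ω u v = (∑ j, u j * v j) + ∑ p ∈ Finset.univ.offDiag, csT ω u v p := by
  classical
  have h1 : csQ ω u v = ∑ p ∈ (Finset.univ ×ˢ Finset.univ : Finset (Fin n × Fin n)),
      csT ω u v p := by
    rw [show (∑ p ∈ (Finset.univ ×ˢ Finset.univ : Finset (Fin n × Fin n)), csT ω u v p)
        = ∑ j, ∑ k, csT ω u v (j, k) from Finset.sum_product _ _ _]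
    unfold csQ csT
    simp only [Matrix.mulVec, dotProduct, countSketch, Matrix.of_apply,
      Finset.sum_mul_sum]
    rw [Finset.sum_comm]
    refine Finset.sum_congr rfl fun j _ => ?_
    rw [Finset.sum_comm]
    refine Finset.sum_congr rfl fun k _ => ?_
    simp only [ite_mul, mul_ite, zero_mul, mul_zero]
    rw [Finset.sum_ite_eq (Finset.univ : Finset (Fin r)) (ω.1 k)]
    by_cases h : ω.1 j = ω.1 k <;> simp [h]
    ring
  rw [h1, ← Finset.diag_union_offDiag (Finset.univ : Finset (Fin n)),
    Finset.sum_union (Finset.disjoint_diag_offDiag _), Finset.sum_diag]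
  congr 1
  refine Finset.sum_congr rfl fun j _ => ?_
  simp [csT, sgn_mul_self]

lemma core {r n : ℕ} (u v : Fin n → ℝ) :
    (r:ℝ) * ∑ ω : (Fin n → Fin r) × (Fin n → Bool),
        (∑ p ∈ Finset.univ.offDiag, csT ω u v p) ^ 2
      ≤ 2 * (Fintype.card ((Fin n → Fin r) × (Fin n → Bool)) : ℝ)
          * ((∑ j, u j ^ 2) * (∑ k, v k ^ 2)) := by
  classical
  set P : Finset (Fin n × Fin n) := Finset.univ.offDiag with hP
  rcases P.eq_empty_or_nonempty with hPe | hPne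
  · rw [hPe]
    simp only [Finset.sum_empty, zero_pow, OfNat.ofNat_ne_zero, ne_eq, not_false_iff,
      Finset.sum_const_zero, mul_zero]
    positivity
  · obtain ⟨p₀, hp₀⟩ := hPne
    have hn : 1 ≤ n := p₀.1.pos
    have hexp : ∀ ω : (Fin n → Fin r) × (Fin n → Bool),
        (∑ p ∈ P, csT ω u v p) ^ 2 = ∑ p ∈ P, ∑ q ∈ P, csT ω u v p * csT ω u v q := by
      intro ω
      rw [sq, Finset.sum_mul_sum]
    have hswap : (∑ ω : (Fin n → Fin r) × (Fin n → Bool), (∑ p ∈ P, csT ω u v p) ^ 2)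
        = ∑ p ∈ P, ∑ q ∈ P, ∑ ω : (Fin n → Fin r) × (Fin n → Bool),
            csT ω u v p * csT ω u v q := by
      simp only [hexp]
      rw [Finset.sum_comm]
      refine Finset.sum_congr rfl fun p _ => Finset.sum_comm
    rw [hswap]
    have hK : ∀ p ∈ P, ∀ q ∈ P, (∑ ω : (Fin n → Fin r) × (Fin n → Bool),
        csT ω u v p * csT ω u v q)
        = (if q = p ∨ q = p.swap then (2:ℝ)^n * (r:ℝ)^(n-1) else 0) * (u p.1 * v p.2) * (u q.1 * v q.2) := by
      intro p hp q hq
      have hp' : p.1 ≠ p.2 := (Finset.mem_offDiag.mp hp).2.2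
      have hq' : q.1 ≠ q.2 := (Finset.mem_offDiag.mp hq).2.2
      have : ∀ ω : (Fin n → Fin r) × (Fin n → Bool), csT ω u v p * csT ω u v q
          = ((if ω.1 p.1 = ω.1 p.2 then countSketchSign (ω.2 p.1) * countSketchSign (ω.2 p.2) else 0) *
             (if ω.1 q.1 = ω.1 q.2 then countSketchSign (ω.2 q.1) * countSketchSign (ω.2 q.2) else 0))
            * ((u p.1 * v p.2) * (u q.1 * v q.2)) := by
        intro ω; unfold csT; ring
      simp only [this]
      rw [← Finset.sum_mul, Tval p q hp' hq']
      ring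
    rw [Finset.sum_congr rfl (fun p hp => Finset.sum_congr rfl (fun q hq => hK p hp q hq))]
    set K : ℝ := (2:ℝ)^n * (r:ℝ)^(n-1) with hKdef
    have hKnn : 0 ≤ K := by positivity
    have hcollapse : ∀ p ∈ P, (∑ q ∈ P,
        (if q = p ∨ q = p.swap then K else 0) * (u p.1 * v p.2) * (u q.1 * v q.2))
        = K * ((u p.1 * v p.2) * (u p.1 * v p.2) + (u p.1 * v p.2) * (u p.2 * v p.1)) := by
      intro p hp
      have hp' : p.1 ≠ p.2 := (Finset.mem_offDiag.mp hp).2.2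
      have hswne : p.swap ≠ p := fun h => hp' (Prod.ext_iff.mp h).2
      have hswmem : p.swap ∈ P := by
        rw [Finset.mem_offDiag]
        exact ⟨Finset.mem_univ _, Finset.mem_univ _, fun h => hp' h.symm⟩
      have hsplit : ∀ q ∈ P,
          (if q = p ∨ q = p.swap then K else 0) * (u p.1 * v p.2) * (u q.1 * v q.2)
          = (if q = p then K * (u p.1 * v p.2) * (u q.1 * v q.2) else 0)
            + (if q = p.swap then K * (u p.1 * v p.2) * (u q.1 * v q.2) else 0) := by
        intro q _
        by_cases h1 : q = p
        · subst h1
          have h2 : ¬ q = q.swap := fun h => hswne h.symm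
          simp [h2]
        · by_cases h2 : q = p.swap
          · subst h2
            simp [hswne]
          · simp [h1, h2]
      rw [Finset.sum_congr rfl hsplit, Finset.sum_add_distrib,
        Finset.sum_ite_eq' P p _, Finset.sum_ite_eq' P p.swap _, if_pos hp, if_pos hswmem]
      simp only [Prod.fst_swap, Prod.snd_swap]
      ring
    rw [Finset.sum_congr rfl hcollapse]
    have bound1 : (∑ p ∈ P, (u p.1 * v p.2) * (u p.1 * v p.2))
        ≤ (∑ j, u j ^ 2) * (∑ k, v k ^ 2) := by
      have : (∑ p ∈ (Finset.univ ×ˢ Finset.univ : Finset (Fin n × Fin n)),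
          (u p.1 * v p.2) * (u p.1 * v p.2)) = (∑ j, u j ^ 2) * (∑ k, v k ^ 2) := by
        rw [Finset.sum_mul_sum]
        rw [show (∑ p ∈ (Finset.univ ×ˢ Finset.univ : Finset (Fin n × Fin n)),
            (u p.1 * v p.2) * (u p.1 * v p.2)) = ∑ j, ∑ k, (u j * v k) * (u j * v k)
          from Finset.sum_product _ _ _]
        refine Finset.sum_congr rfl fun j _ => Finset.sum_congr rfl fun k _ => by ring
      rw [← this]
      refine Finset.sum_le_sum_of_subset_of_nonneg ?_ ?_
      · intro x hx
        simp [Finset.mem_product]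
      · intro p _ _
        exact mul_self_nonneg _
    have bound2 : (∑ p ∈ P, (u p.1 * v p.2) * (u p.2 * v p.1))
        ≤ (∑ j, u j ^ 2) * (∑ k, v k ^ 2) := by
      have step0 : (∑ p ∈ P, (u p.1 * v p.2) * (u p.2 * v p.1))
          ≤ ∑ p ∈ P, |u p.1 * v p.1| * |u p.2 * v p.2| := by
        refine Finset.sum_le_sum fun p _ => ?_
        have he : (u p.1 * v p.2) * (u p.2 * v p.1) = (u p.1 * v p.1) * (u p.2 * v p.2) := by ring
        rw [he]
        calc (u p.1 * v p.1) * (u p.2 * v p.2) ≤ |(u p.1 * v p.1) * (u p.2 * v p.2)| := le_abs_self _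
          _ = |u p.1 * v p.1| * |u p.2 * v p.2| := abs_mul _ _
      have step1 : (∑ p ∈ P, (u p.1 * v p.2) * (u p.2 * v p.1))
          ≤ ∑ p ∈ (Finset.univ ×ˢ Finset.univ : Finset (Fin n × Fin n)),
              |u p.1 * v p.1| * |u p.2 * v p.2| := by
        refine step0.trans (Finset.sum_le_sum_of_subset_of_nonneg ?_ ?_)
        · intro x hx; simp [Finset.mem_product]
        · intro p _ _; positivity
      refine step1.trans ?_
      have heq : (∑ p ∈ (Finset.univ ×ˢ Finset.univ : Finset (Fin n × Fin n)),
          |u p.1 * v p.1| * |u p.2 * v p.2|) = (∑ j, |u j| * |v j|) ^ 2 := by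
        rw [sq, Finset.sum_mul_sum]
        rw [show (∑ p ∈ (Finset.univ ×ˢ Finset.univ : Finset (Fin n × Fin n)),
            |u p.1 * v p.1| * |u p.2 * v p.2|) = ∑ j, ∑ k, |u j * v j| * |u k * v k|
          from Finset.sum_product _ _ _]
        refine Finset.sum_congr rfl fun j _ => Finset.sum_congr rfl fun k _ => by
          rw [abs_mul, abs_mul]
      rw [heq]
      have := Finset.sum_mul_sq_le_sq_mul_sq Finset.univ (fun j => |u j|) (fun j => |v j|)
      simpa [sq_abs] using this
    have hcard : (Fintype.card ((Fin n → Fin r) × (Fin n → Bool)) : ℝ) = (2:ℝ)^n * (r:ℝ)^n := by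
      simp [Fintype.card_fun]
      ring
    have hrK : (r:ℝ) * K = (2:ℝ)^n * (r:ℝ)^n := by
      rw [hKdef, ← mul_assoc, mul_comm (r:ℝ) ((2:ℝ)^n), mul_assoc]
      congr 1
      rw [← pow_succ']
      congr 1
      omega
    have hsum : (∑ p ∈ P, K * ((u p.1 * v p.2) * (u p.1 * v p.2) + (u p.1 * v p.2) * (u p.2 * v p.1)))
        = K * ((∑ p ∈ P, (u p.1 * v p.2) * (u p.1 * v p.2))
            + (∑ p ∈ P, (u p.1 * v p.2) * (u p.2 * v p.1))) := by
      rw [← Finset.mul_sum, ← Finset.sum_add_distrib]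
    rw [hsum]
    have final : (r:ℝ) * (K * ((∑ p ∈ P, (u p.1 * v p.2) * (u p.1 * v p.2))
        + (∑ p ∈ P, (u p.1 * v p.2) * (u p.2 * v p.1))))
        ≤ (r:ℝ) * K * (2 * ((∑ j, u j ^ 2) * (∑ k, v k ^ 2))) := by
      rw [← mul_assoc]
      refine mul_le_mul_of_nonneg_left ?_ (by positivity)
      nlinarith [bound1, bound2]
    refine final.trans (le_of_eq ?_)
    rw [hrK, hcard]
    ring

lemma expand_sq {ι κ : Type*} [Fintype ι] [Fintype κ] (g : κ → ι → ℝ) (y : κ → ℝ) :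
    ∑ i, (∑ j, y j * g j i) ^ 2 = ∑ j, ∑ k, y j * y k * ∑ i, g j i * g k i := by
  simp only [sq, Finset.sum_mul_sum]
  rw [Finset.sum_comm]
  refine Finset.sum_congr rfl fun j _ => ?_
  rw [Finset.sum_comm]
  refine Finset.sum_congr rfl fun k _ => ?_
  rw [Finset.mul_sum]
  refine Finset.sum_congr rfl fun i _ => by ring

lemma mulVec_comb {r n m : ℕ} (S : Matrix (Fin r) (Fin n) ℝ) (U : Fin m → Fin n → ℝ)
    (y : Fin m → ℝ) :
    S.mulVec (fun t => ∑ j, y j * U j t) = fun i => ∑ j, y j * S.mulVec (U j) i := by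
  funext i
  simp only [Matrix.mulVec, dotProduct, Finset.mul_sum]
  rw [Finset.sum_comm]
  refine Finset.sum_congr rfl fun j _ => Finset.sum_congr rfl fun t _ => by ring

lemma euclNorm_sq {n : ℕ} (z : Fin n → ℝ) : euclNorm z ^ 2 = ∑ i, z i ^ 2 := by
  rw [euclNorm, Real.sq_sqrt]
  positivity

lemma abs_le_of_sq (a c : ℝ) (h : a ^ 2 ≤ c ^ 2) (hc : 0 ≤ c) : -c ≤ a ∧ a ≤ c := by
  constructor <;> nlinarith

lemma markov_count {α : Type*} [Fintype α] [DecidableEq α] (F : α → ℝ) (t c : ℝ)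
    (hF : ∀ a, 0 ≤ F a) (ht : 0 < t) (hsum : ∑ a, F a ≤ t * c) :
    (((Finset.univ.filter (fun a => ¬ F a ≤ t)).card : ℝ)) ≤ c := by
  classical
  set B := Finset.univ.filter (fun a => ¬ F a ≤ t) with hB
  have h1 : t * (B.card : ℝ) ≤ ∑ a ∈ B, F a := by
    calc t * (B.card : ℝ) = ∑ _a ∈ B, t := by rw [Finset.sum_const, nsmul_eq_mul]; ring
      _ ≤ ∑ a ∈ B, F a := Finset.sum_le_sum fun a ha =>
          le_of_lt (lt_of_not_ge (Finset.mem_filter.mp ha).2)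
  have h2 : ∑ a ∈ B, F a ≤ ∑ a, F a :=
    Finset.sum_le_sum_of_subset_of_nonneg (Finset.subset_univ _) (fun a _ _ => hF a)
  have h3 : t * (B.card : ℝ) ≤ t * c := le_trans h1 (le_trans h2 hsum)
  exact le_of_mul_le_mul_left h3 ht

end Aux

/-- a CountSketch matrix with `r ≥ C·d²/(ε²δ)` rows is, with probability
at least `1 − δ`, a `(1 ± ε)` ℓ₂-subspace embedding for any fixed `n × d` matrix `A`. -/
theorem stmt2 :
    ∃ C : ℝ, 0 < C ∧
      ∀ (ε δ : ℝ), 0 < ε → ε < 1 → 0 < δ → δ < 1 →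
      ∀ (r n d : ℕ) (hr : r ≠ 0), (r : ℝ) ≥ C * (d : ℝ) ^ 2 / (ε ^ 2 * δ) →
      ∀ A : Matrix (Fin n) (Fin d) ℝ,
        countSketchMeasure r n hr
          {ω | ∀ x : Fin d → ℝ,
            (1 - ε) * euclNorm (A.mulVec x) ^ 2 ≤ euclNorm ((countSketch ω * A).mulVec x) ^ 2 ∧
            euclNorm ((countSketch ω * A).mulVec x) ^ 2 ≤ (1 + ε) * euclNorm (A.mulVec x) ^ 2}
          ≥ ENNReal.ofReal (1 - δ) := by
  classical
  refine ⟨2, by norm_num, ?_⟩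
  intro ε δ hε hε1 hδ hδ1 r n d hr hrge A
  haveI : NeZero r := ⟨hr⟩
  obtain ⟨m, U, hmd, hU, hA⟩ := exists_onb n d A
  set Ω := (Fin n → Fin r) × (Fin n → Bool) with hΩ
  -- deviation entries
  set B : Ω → Fin m → Fin m → ℝ :=
    fun ω j k => csQ ω (U j) (U k) - if j = k then 1 else 0 with hBdef
  set F : Ω → ℝ := fun ω => ∑ j, ∑ k, (B ω j k) ^ 2 with hFdef
  -- B as an off-diagonal sum
  have hBoff : ∀ (ω : Ω) (j k : Fin m),
      B ω j k = ∑ p ∈ Finset.univ.offDiag, csT ω (U j) (U k) p := by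
    intro ω j k
    rw [hBdef]
    simp only
    rw [csQ_eq ω (U j) (U k), hU j k]
    ring
  -- Markov bound on the bad set
  have hsumF : (∑ ω : Ω, F ω) ≤ (Fintype.card Ω : ℝ) * (ε ^ 2 * δ) := by
    have hswap : (∑ ω : Ω, F ω) = ∑ j : Fin m, ∑ k : Fin m, ∑ ω : Ω, (B ω j k) ^ 2 := by
      rw [hFdef]
      simp only
      rw [Finset.sum_comm]
      exact Finset.sum_congr rfl fun j _ => Finset.sum_comm
    rw [hswap]
    have hterm : ∀ j k : Fin m, (r : ℝ) * ∑ ω : Ω, (B ω j k) ^ 2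
        ≤ 2 * (Fintype.card Ω : ℝ) := by
      intro j k
      have := core (r := r) (n := n) (U j) (U k)
      have hUj : (∑ i, U j i ^ 2) = 1 := by
        have := hU j j; simpa [sq] using this
      have hUk : (∑ i, U k i ^ 2) = 1 := by
        have := hU k k; simpa [sq] using this
      calc (r : ℝ) * ∑ ω : Ω, (B ω j k) ^ 2
          = (r:ℝ) * ∑ ω : Ω, (∑ p ∈ Finset.univ.offDiag, csT ω (U j) (U k) p) ^ 2 := by
            congr 1
            exact Finset.sum_congr rfl fun ω _ => by rw [hBoff]
        _ ≤ 2 * (Fintype.card Ω : ℝ) * ((∑ i, U j i ^ 2) * (∑ i, U k i ^ 2)) := core _ _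
        _ = 2 * (Fintype.card Ω : ℝ) := by rw [hUj, hUk]; ring
    have hrpos : (0:ℝ) < r := by
      exact_mod_cast Nat.pos_of_ne_zero hr
    have hsum2 : (∑ j : Fin m, ∑ k : Fin m, ∑ ω : Ω, (B ω j k) ^ 2)
        ≤ (m:ℝ)^2 * (2 * (Fintype.card Ω : ℝ) / r) := by
      calc (∑ j : Fin m, ∑ k : Fin m, ∑ ω : Ω, (B ω j k) ^ 2)
          ≤ ∑ _j : Fin m, ∑ _k : Fin m, 2 * (Fintype.card Ω : ℝ) / r := by
            refine Finset.sum_le_sum fun j _ => Finset.sum_le_sum fun k _ => ?_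
            rw [le_div_iff₀ hrpos, mul_comm]
            exact hterm j k
        _ = (m:ℝ)^2 * (2 * (Fintype.card Ω : ℝ) / r) := by
            simp [Finset.sum_const]
            ring
    refine hsum2.trans ?_
    -- (m)^2 * (2 card / r) ≤ card * (ε² δ)  ⟸  2 m² ≤ r ε² δ  ⟸  2 d² ≤ r ε² δ
    have hm2 : (m:ℝ)^2 ≤ (d:ℝ)^2 := by
      have : (m:ℝ) ≤ (d:ℝ) := by exact_mod_cast hmd
      nlinarith [Nat.cast_nonneg (α := ℝ) m]
    have hrd : 2 * (d:ℝ)^2 ≤ (r:ℝ) * (ε^2 * δ) := by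
      have hpos : 0 < ε ^ 2 * δ := by positivity
      rw [ge_iff_le, div_le_iff₀ hpos] at hrge
      linarith
    have hcardpos : (0:ℝ) < (Fintype.card Ω : ℝ) := by
      have : 0 < Fintype.card Ω := Fintype.card_pos
      exact_mod_cast this
    rw [div_eq_mul_inv]
    rw [show (m:ℝ)^2 * (2 * (Fintype.card Ω : ℝ) * (r:ℝ)⁻¹)
        = (2 * (m:ℝ)^2) * (Fintype.card Ω : ℝ) * (r:ℝ)⁻¹ by ring]
    rw [show (Fintype.card Ω : ℝ) * (ε^2*δ) = ((r:ℝ) * (ε^2*δ)) * (Fintype.card Ω : ℝ) * (r:ℝ)⁻¹ by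
      field_simp]
    have h2m : 2 * (m:ℝ)^2 ≤ (r:ℝ) * (ε^2*δ) := by nlinarith
    have hrinv : (0:ℝ) ≤ (r:ℝ)⁻¹ := by positivity
    have := mul_le_mul_of_nonneg_right
      (mul_le_mul_of_nonneg_right h2m hcardpos.le) hrinv
    linarith
  -- the good event implies the embedding property
  have hgood : ∀ ω : Ω, F ω ≤ ε ^ 2 → ∀ x : Fin d → ℝ,
      (1 - ε) * euclNorm (A.mulVec x) ^ 2 ≤ euclNorm ((countSketch ω * A).mulVec x) ^ 2 ∧
      euclNorm ((countSketch ω * A).mulVec x) ^ 2 ≤ (1 + ε) * euclNorm (A.mulVec x) ^ 2 := by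
    intro ω hF x
    obtain ⟨y, hxy⟩ := hA x
    have hAx : euclNorm (A.mulVec x) ^ 2 = ∑ j, y j ^ 2 := by
      rw [euclNorm_sq, hxy]
      rw [expand_sq U y]
      have : ∀ j : Fin m, (∑ k, y j * y k * ∑ i, U j i * U k i) = y j ^ 2 := by
        intro j
        rw [Finset.sum_congr rfl (fun k _ => by rw [hU j k])]
        simp [Finset.sum_ite_eq', mul_ite, sq]
      exact Finset.sum_congr rfl fun j _ => this j
    have hSAx : euclNorm ((countSketch ω * A).mulVec x) ^ 2
        = ∑ j, ∑ k, y j * y k * csQ ω (U j) (U k) := by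
      rw [euclNorm_sq, ← Matrix.mulVec_mulVec, hxy, mulVec_comb]
      rw [expand_sq (fun j i => (countSketch ω).mulVec (U j) i) y]
      rfl
    -- split into identity + deviation
    set D : ℝ := ∑ j, ∑ k, y j * y k * B ω j k with hD
    have hsplit : euclNorm ((countSketch ω * A).mulVec x) ^ 2 = (∑ j, y j ^ 2) + D := by
      rw [hSAx, hD]
      have : ∀ j k : Fin m, y j * y k * csQ ω (U j) (U k)
          = y j * y k * (if j = k then (1:ℝ) else 0) + y j * y k * B ω j k := by
        intro j k
        rw [hBdef]
        simp only
        ring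
      rw [Finset.sum_congr rfl fun j _ => Finset.sum_congr rfl fun k _ => this j k]
      rw [Finset.sum_congr rfl fun j _ => Finset.sum_add_distrib, Finset.sum_add_distrib]
      congr 1
      refine Finset.sum_congr rfl fun j _ => ?_
      simp [Finset.sum_ite_eq', mul_ite, sq]
    -- Cauchy-Schwarz: |D| ≤ ε ∑ y²
    have hCS : D ^ 2 ≤ F ω * (∑ j, y j ^ 2) ^ 2 := by
      have hD' : D = ∑ p ∈ (Finset.univ ×ˢ Finset.univ : Finset (Fin m × Fin m)),
          (y p.1 * y p.2) * B ω p.1 p.2 := by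
        rw [hD, show (∑ p ∈ (Finset.univ ×ˢ Finset.univ : Finset (Fin m × Fin m)),
            (y p.1 * y p.2) * B ω p.1 p.2) = ∑ j, ∑ k, (y j * y k) * B ω j k
          from Finset.sum_product _ _ _]
      have hF' : F ω = ∑ p ∈ (Finset.univ ×ˢ Finset.univ : Finset (Fin m × Fin m)),
          (B ω p.1 p.2) ^ 2 := by
        rw [hFdef, show (∑ p ∈ (Finset.univ ×ˢ Finset.univ : Finset (Fin m × Fin m)),
            (B ω p.1 p.2) ^ 2) = ∑ j, ∑ k, (B ω j k) ^ 2 from Finset.sum_product _ _ _]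
      have hy2 : (∑ p ∈ (Finset.univ ×ˢ Finset.univ : Finset (Fin m × Fin m)),
          (y p.1 * y p.2) ^ 2) = (∑ j, y j ^ 2) ^ 2 := by
        rw [sq, Finset.sum_mul_sum, show (∑ p ∈ (Finset.univ ×ˢ Finset.univ :
            Finset (Fin m × Fin m)), (y p.1 * y p.2) ^ 2) = ∑ j, ∑ k, (y j * y k) ^ 2
          from Finset.sum_product _ _ _]
        refine Finset.sum_congr rfl fun j _ => Finset.sum_congr rfl fun k _ => by ring
      rw [hD', hF']
      calc (∑ p ∈ (Finset.univ ×ˢ Finset.univ : Finset (Fin m × Fin m)),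
            (y p.1 * y p.2) * B ω p.1 p.2) ^ 2
          ≤ (∑ p ∈ (Finset.univ ×ˢ Finset.univ : Finset (Fin m × Fin m)), (y p.1 * y p.2) ^ 2)
            * ∑ p ∈ (Finset.univ ×ˢ Finset.univ : Finset (Fin m × Fin m)), (B ω p.1 p.2) ^ 2 :=
            Finset.sum_mul_sq_le_sq_mul_sq _ _ _
        _ = (∑ p ∈ (Finset.univ ×ˢ Finset.univ : Finset (Fin m × Fin m)), (B ω p.1 p.2) ^ 2)
            * (∑ j, y j ^ 2) ^ 2 := by rw [hy2]; ring
    have hynn : (0:ℝ) ≤ ∑ j, y j ^ 2 := by positivity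
    have hDabs : -(ε * ∑ j, y j ^ 2) ≤ D ∧ D ≤ ε * ∑ j, y j ^ 2 := by
      refine abs_le_of_sq D (ε * ∑ j, y j ^ 2) ?_ (by positivity)
      calc D ^ 2 ≤ F ω * (∑ j, y j ^ 2) ^ 2 := hCS
        _ ≤ ε ^ 2 * (∑ j, y j ^ 2) ^ 2 := by nlinarith [sq_nonneg (∑ j, y j ^ 2)]
        _ = (ε * ∑ j, y j ^ 2) ^ 2 := by ring
    rw [hsplit, hAx]
    constructor
    · linarith [hDabs.1]
    · linarith [hDabs.2]
  -- now the measure computation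
  set Gbad : Finset Ω := Finset.univ.filter (fun ω => ¬ F ω ≤ ε ^ 2) with hGbad
  have hcount : (Gbad.card : ℝ) ≤ δ * (Fintype.card Ω : ℝ) := by
    have := markov_count F (ε ^ 2) (δ * (Fintype.card Ω : ℝ))
      (fun ω => by rw [hFdef]; positivity) (by positivity) ?_
    · exact this
    · refine hsumF.trans (le_of_eq ?_)
      ring
  -- measure of the bad set
  have hμbad : countSketchMeasure r n hr {ω : Ω | ¬ F ω ≤ ε ^ 2} ≤ ENNReal.ofReal δ := by
    rw [countSketchMeasure]
    rw [PMF.toMeasure_apply_fintype]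
    have hind : ∀ ω : Ω, ({ω : Ω | ¬ F ω ≤ ε ^ 2}).indicator
        (⇑(PMF.uniformOfFintype Ω)) ω
        = if ω ∈ Gbad then ((Fintype.card Ω : ENNReal))⁻¹ else 0 := by
      intro ω
      rw [Set.indicator_apply]
      by_cases h : ω ∈ Gbad
      · have h' : ω ∈ {ω : Ω | ¬ F ω ≤ ε ^ 2} := by
          simpa [hGbad] using (Finset.mem_filter.mp h).2
        rw [if_pos h', if_pos h, PMF.uniformOfFintype_apply]
      · have h' : ω ∉ {ω : Ω | ¬ F ω ≤ ε ^ 2} := by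
          intro hc
          exact h (Finset.mem_filter.mpr ⟨Finset.mem_univ _, hc⟩)
        rw [if_neg h', if_neg h]
    rw [Finset.sum_congr rfl fun ω _ => hind ω]
    rw [Finset.sum_ite_mem, Finset.univ_inter, Finset.sum_const, nsmul_eq_mul]
    -- (Gbad.card : ℝ≥0∞) * (card Ω)⁻¹ ≤ ofReal δ
    have hcardpos : (0:ℝ) < (Fintype.card Ω : ℝ) := by
      have : 0 < Fintype.card Ω := Fintype.card_pos
      exact_mod_cast this
    have e1 : ((Gbad.card : ℝ≥0∞)) = ENNReal.ofReal (Gbad.card : ℝ) := by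
      rw [ENNReal.ofReal_natCast]
    have e2 : ((Fintype.card Ω : ℝ≥0∞))⁻¹ = ENNReal.ofReal ((Fintype.card Ω : ℝ))⁻¹ := by
      rw [ENNReal.ofReal_inv_of_pos hcardpos, ENNReal.ofReal_natCast]
    rw [e1, e2, ← ENNReal.ofReal_mul (by positivity)]
    refine ENNReal.ofReal_le_ofReal ?_
    have h5 := mul_le_mul_of_nonneg_right hcount
      (by positivity : (0:ℝ) ≤ ((Fintype.card Ω : ℝ))⁻¹)
    have h6 : δ * (Fintype.card Ω : ℝ) * ((Fintype.card Ω : ℝ))⁻¹ = δ := by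
      field_simp
    linarith
  -- assemble
  have hmono : countSketchMeasure r n hr {ω : Ω | F ω ≤ ε ^ 2}
      ≤ countSketchMeasure r n hr
        {ω : Ω | ∀ x : Fin d → ℝ,
          (1 - ε) * euclNorm (A.mulVec x) ^ 2 ≤ euclNorm ((countSketch ω * A).mulVec x) ^ 2 ∧
          euclNorm ((countSketch ω * A).mulVec x) ^ 2 ≤ (1 + ε) * euclNorm (A.mulVec x) ^ 2} := by
    refine measure_mono ?_
    intro ω hω
    exact hgood ω hω
  refine le_trans ?_ hmono
  -- ofReal (1-δ) ≤ μ G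
  haveI : IsProbabilityMeasure (countSketchMeasure r n hr) := by
    rw [countSketchMeasure]
    exact PMF.toMeasure.isProbabilityMeasure _
  have hunion : (1:ℝ≥0∞) ≤ countSketchMeasure r n hr {ω : Ω | F ω ≤ ε ^ 2}
      + countSketchMeasure r n hr {ω : Ω | ¬ F ω ≤ ε ^ 2} := by
    have : ({ω : Ω | F ω ≤ ε ^ 2} ∪ {ω : Ω | ¬ F ω ≤ ε ^ 2}) = Set.univ := by
      refine Set.eq_univ_of_forall fun ω => ?_
      rcases le_or_gt (F ω) (ε ^ 2) with h | h
      · exact Or.inl h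
      · exact Or.inr (not_le.mpr h)
    calc (1:ℝ≥0∞) = countSketchMeasure r n hr Set.univ := (measure_univ).symm
      _ = countSketchMeasure r n hr ({ω : Ω | F ω ≤ ε ^ 2} ∪ {ω : Ω | ¬ F ω ≤ ε ^ 2}) := by
          rw [this]
      _ ≤ _ := measure_union_le _ _
  have h1 : ENNReal.ofReal (1 - δ) + ENNReal.ofReal δ = 1 := by
    rw [← ENNReal.ofReal_add (by linarith) (by linarith)]
    norm_num
  have h2 : ENNReal.ofReal (1 - δ) = 1 - ENNReal.ofReal δ := by
    rw [ENNReal.ofReal_sub _ hδ.le, ENNReal.ofReal_one]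
  refine (le_of_eq h2).trans ?_
  have h3 : (1:ℝ≥0∞) - ENNReal.ofReal δ
      ≤ 1 - countSketchMeasure r n hr {ω : Ω | ¬ F ω ≤ ε ^ 2} :=
    tsub_le_tsub_left hμbad 1
  refine h3.trans ?_
  exact tsub_le_iff_right.mpr hunion
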